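/- (Sufficiency direction of the equivalence theorem, discrete version.) Let g(ω) = Σ_{i,j} p_{i,j} inf_{θ∈Θ_j} Σ_{k=1}^n ω_k I_{i,j}(k,θ) on the simplex Δ with p_{i,j} ≥ 0. Suppose ω* ∈ Δ is such that for each (i,j) with p_{i,j} > 0 the infimum at ω* is attained at some θ̂_{i,j}, and define Ψ(k) = Σ_{i,j} p_{i,j} I_{i,j}(k, θ̂_{i,j}). If Ψ(k) ≤ g(ω*) for all k = 1,…,n, then ω* maximizes g over Δ. -/
import Mathlib


open Finset

/-- Sufficiency direction of the equivalence theorem (discrete version): if the directional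
function `Ψ(k) = Σ_{i,j} p_{i,j} I_{i,j}(k, θ̂_{i,j})` satisfies `Ψ(k) ≤ g(ω*)` for all `k`,
where `θ̂_{i,j}` attains the infimum defining `g` at `ω*`, then `ω*` maximizes `g` over the
simplex. -/
theorem equivalence_theorem_sufficiency {n : ℕ} {ι : Type*} [Fintype ι]
    (Θ : ι → Type*) [∀ j, Nonempty (Θ j)]
    (I : (i j : ι) → Fin n → Θ j → ℝ)
    (p : ι → ι → ℝ) (hp : ∀ i j, 0 ≤ p i j)
    (g : (Fin n → ℝ) → ℝ)
    (hg : ∀ ω, g ω = ∑ i : ι, ∑ j : ι, p i j * ⨅ θ : Θ j, ∑ k, ω k * I i j k θ)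
    (hbdd : ∀ ω ∈ stdSimplex ℝ (Fin n), ∀ i j : ι,
      BddBelow (Set.range fun θ : Θ j => ∑ k, ω k * I i j k θ))
    (ωs : Fin n → ℝ) (hωs : ωs ∈ stdSimplex ℝ (Fin n))
    (θhat : (i j : ι) → Θ j)
    (hatt : ∀ i j, 0 < p i j →
      IsLeast (Set.range fun θ : Θ j => ∑ k, ωs k * I i j k θ) (∑ k, ωs k * I i j k (θhat i j)))
    (Ψ : Fin n → ℝ)
    (hΨ : ∀ k, Ψ k = ∑ i : ι, ∑ j : ι, p i j * I i j k (θhat i j))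
    (hineq : ∀ k, Ψ k ≤ g ωs) :
    ∀ ω ∈ stdSimplex ℝ (Fin n), g ω ≤ g ωs := by
  intro ω hω
  have h1 : g ω ≤ ∑ i : ι, ∑ j : ι, p i j * ∑ k, ω k * I i j k (θhat i j) := by
    rw [hg]
    refine Finset.sum_le_sum fun i _ => Finset.sum_le_sum fun j _ => ?_
    exact mul_le_mul_of_nonneg_left (ciInf_le (hbdd ω hω i j) (θhat i j)) (hp i j)
  have h2 : (∑ i : ι, ∑ j : ι, p i j * ∑ k, ω k * I i j k (θhat i j))
      = ∑ k, ω k * Ψ k := by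
    calc ∑ i : ι, ∑ j : ι, p i j * ∑ k, ω k * I i j k (θhat i j)
        = ∑ i : ι, ∑ j : ι, ∑ k, ω k * (p i j * I i j k (θhat i j)) := by
          refine Finset.sum_congr rfl fun i _ => Finset.sum_congr rfl fun j _ => ?_
          rw [Finset.mul_sum]; exact Finset.sum_congr rfl fun k _ => by ring
      _ = ∑ i : ι, ∑ k, ∑ j : ι, ω k * (p i j * I i j k (θhat i j)) :=
          Finset.sum_congr rfl fun i _ => Finset.sum_comm
      _ = ∑ k, ∑ i : ι, ∑ j : ι, ω k * (p i j * I i j k (θhat i j)) :=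
          Finset.sum_comm
      _ = ∑ k, ω k * Ψ k := by
          refine Finset.sum_congr rfl fun k _ => ?_
          rw [hΨ, Finset.mul_sum]
          exact Finset.sum_congr rfl fun i _ => (Finset.mul_sum _ _ _).symm
  have h3 : ∑ k, ω k * Ψ k ≤ g ωs := by
    calc ∑ k, ω k * Ψ k ≤ ∑ k, ω k * g ωs :=
          Finset.sum_le_sum fun k _ => mul_le_mul_of_nonneg_left (hineq k) (hω.1 k)
      _ = g ωs := by rw [← Finset.sum_mul, hω.2, one_mul]
  linarith [h1, h2.le, h3]
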